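/- Let G be a connected k-cyclic undirected multigraph with k ≥ 1 (i.e., |E(G)| - |V(G)| + 1 = k). Then the number n_c(G) of cospectral classes of mixed multigraphs with underlying graph G satisfies n_c(G) ≤ n_s(G) ≤ 6^k/2 + 2^{k-1}, where n_s(G) is the number of switching equivalence classes in 𝓜(G). -/

import Mathlib

open Complex Finset

noncomputable section

/-- The primitive sixth root of unity `ω = 1/2 + (√3/2)i`. -/
def omega6 : ℂ := ⟨1/2, Real.sqrt 3 / 2⟩

/-- A loopless undirected multigraph with vertex type `V` and edge type `E`:
each edge has a pair of distinct endpoints. -/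
structure Multigraph (V E : Type) where
  ends : E → Sym2 V
  loopless : ∀ e, ¬ (ends e).IsDiag

variable {V E : Type}

/-- A mixed multigraph with underlying multigraph `G`: each edge is either
unoriented (`none`) or oriented (`some (u, v)`, an arc from `u` to `v`),
the orientation is compatible with the endpoints, and there are no digons
(two parallel edges oriented in opposite directions). -/
structure MixedOrientation (G : Multigraph V E) where
  orient : E → Option (V × V)
  compat : ∀ e a b, orient e = some (a, b) → G.ends e = s(a, b)
  noDigon : ∀ e f a b, G.ends e = G.ends f → orient e = some (a, b) → orient f ≠ some (b, a)

/-- The underlying graph of `G`, viewed as the mixed multigraph with no oriented edges. -/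
def Multigraph.triv (G : Multigraph V E) : MixedOrientation G where
  orient := fun _ => none
  compat := fun _ _ _ h => by simp at h
  noDigon := fun _ _ _ _ _ h => by simp at h

variable [DecidableEq V]

/-- The contribution of edge `e`, traversed from `u` to `v`, to the Hermitian adjacency
matrix entry `N_{uv}` and to walk weights: `1` if `e` is unoriented, `ω` if `e` is an arc
from `u` to `v`, and `conj ω` if `e` is an arc from `v` to `u`. -/
def stepWeight {G : Multigraph V E} (M : MixedOrientation G) (e : E) (u v : V) : ℂ :=
  match M.orient e with
  | none => 1
  | some (a, _) => if a = u then omega6 else (starRingEnd ℂ) omega6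

/-- The Hermitian adjacency matrix `N(M)` of a mixed multigraph:
`N_{uv} = e{u,v} + e(u,v)·ω + e(v,u)·conj ω`. -/
def herm [Fintype V] [Fintype E] {G : Multigraph V E} (M : MixedOrientation G) :
    Matrix V V ℂ :=
  Matrix.of fun u v => ∑ e : E, if G.ends e = s(u, v) then stepWeight M e u v else 0

/-- A (mixed) cycle in the multigraph `G`: a cyclic sequence of `n ≥ 2` distinct vertices
joined by `n` distinct edges. -/
structure MixedCycle (G : Multigraph V E) where
  n : ℕ
  two_le : 2 ≤ n
  vert : ZMod n → V
  edge : ZMod n → E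
  vert_inj : Function.Injective vert
  edge_inj : Function.Injective edge
  ends_eq : ∀ i, G.ends (edge i) = s(vert i, vert (i + 1))

/-- The weight `wt(C) = ω^f · (conj ω)^b` of a mixed cycle `C` in `M`, traversed in
the direction given by its parametrization. -/
def cycleWeight {G : Multigraph V E} (M : MixedOrientation G) (C : MixedCycle G) : ℂ :=
  haveI : NeZero C.n := ⟨by have := C.two_le; omega⟩
  ∏ i : ZMod C.n, stepWeight M (C.edge i) (C.vert i) (C.vert (i + 1))

/-- The value `ν(C) = wt(C) + conj (wt(C))` of a mixed cycle. -/
def nu {G : Multigraph V E} (M : MixedOrientation G) (C : MixedCycle G) : ℂ :=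
  cycleWeight M C + (starRingEnd ℂ) (cycleWeight M C)

/-- The number of forward arcs of a mixed cycle (relative to its direction). -/
def fCount {G : Multigraph V E} (M : MixedOrientation G) (C : MixedCycle G) : ℕ :=
  haveI : NeZero C.n := ⟨by have := C.two_le; omega⟩
  (Finset.univ.filter fun i : ZMod C.n =>
    M.orient (C.edge i) = some (C.vert i, C.vert (i + 1))).card

/-- The number of backward arcs of a mixed cycle (relative to its direction). -/
def bCount {G : Multigraph V E} (M : MixedOrientation G) (C : MixedCycle G) : ℕ :=
  haveI : NeZero C.n := ⟨by have := C.two_le; omega⟩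
  (Finset.univ.filter fun i : ZMod C.n =>
    M.orient (C.edge i) = some (C.vert (i + 1), C.vert i)).card

/-- The edge set of a mixed cycle. -/
def cycleEdges [DecidableEq E] {G : Multigraph V E} (C : MixedCycle G) : Finset E :=
  haveI : NeZero C.n := ⟨by have := C.two_le; omega⟩
  Finset.image C.edge Finset.univ

/-- Reachability in `G` using only edges from the set `S`. -/
def ReachIn (G : Multigraph V E) (S : Set E) (u v : V) : Prop :=
  Relation.ReflTransGen (fun x y => ∃ e ∈ S, G.ends e = s(x, y)) u v

/-- A multigraph is connected if every two vertices are joined by a walk. -/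
def Multigraph.Connected (G : Multigraph V E) : Prop :=
  ∀ u v : V, ReachIn G Set.univ u v

/-- All entries of the diagonal `d` are sixth roots of unity `ω^i`, `0 ≤ i ≤ 5`. -/
def IsSixthRoots (d : V → ℂ) : Prop := ∀ v, ∃ i : ℕ, i ≤ 5 ∧ d v = omega6 ^ i

/-- `M''` is obtained from `M'` by a three-way switching: `N(M'') = D⁻¹ N(M') D` for
some diagonal matrix `D` whose diagonal entries are sixth roots of unity. -/
def Switching [Fintype V] [Fintype E] {G : Multigraph V E}
    (M' M'' : MixedOrientation G) : Prop :=
  ∃ d : V → ℂ, IsSixthRoots d ∧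
    herm M'' = (Matrix.diagonal d)⁻¹ * herm M' * Matrix.diagonal d

/-- `M'` is the converse of `M`: every arc of `M` is reversed. -/
def IsConverse {G : Multigraph V E} (M M' : MixedOrientation G) : Prop :=
  ∀ e, M'.orient e = Option.map Prod.swap (M.orient e)

/-- `M'` and `M''` are switching equivalent: one is obtained from the other by a
three-way switching and/or taking a converse. -/
def SwitchEquiv [Fintype V] [Fintype E] {G : Multigraph V E}
    (M' M'' : MixedOrientation G) : Prop :=
  Switching M' M'' ∨ ∃ Mc : MixedOrientation G, IsConverse M' Mc ∧ Switching Mc M''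

/-- `T` is (the edge set of) a spanning tree of `G`: it connects all vertices and
contains no cycle. -/
def IsSpanningTree (G : Multigraph V E) (T : Set E) : Prop :=
  (∀ u v : V, ReachIn G T u v) ∧ ∀ C : MixedCycle G, ¬ (∀ i, C.edge i ∈ T)

/-- `C` is a fundamental cycle with respect to the spanning tree `T`: it uses exactly
one non-tree edge. -/
def IsFundamentalCycle (G : Multigraph V E) (T : Set E) (C : MixedCycle G) : Prop :=
  ∃ e, e ∉ T ∧ ∀ i, C.edge i = e ∨ C.edge i ∈ T


lemma omega6_sq : omega6 ^ 2 = omega6 - 1 := by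
  have h3 : Real.sqrt 3 * Real.sqrt 3 = 3 := Real.mul_self_sqrt (by norm_num)
  simp [omega6, Complex.ext_iff, pow_two, Complex.mul_re, Complex.mul_im]
  constructor <;> nlinarith [h3]

lemma omega6_mul_conj : omega6 * (starRingEnd ℂ) omega6 = 1 := by
  have h3 : Real.sqrt 3 * Real.sqrt 3 = 3 := Real.mul_self_sqrt (by norm_num)
  simp [omega6, Complex.ext_iff, Complex.mul_re, Complex.mul_im]
  constructor <;> nlinarith [h3]

lemma omega6_cube : omega6 ^ 3 = -1 := by
  linear_combination (omega6 + 1) * omega6_sq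

lemma omega6_pow_six : omega6 ^ 6 = 1 := by
  have : omega6 ^ 6 = (omega6 ^ 3) ^ 2 := by ring
  rw [this, omega6_cube]; ring

lemma omega6_ne_zero : omega6 ≠ 0 := by
  intro h
  have := congrArg Complex.re h
  simp [omega6] at this

def wpow (j : ZMod 6) : ℂ := omega6 ^ j.val

lemma omega6_pow_mod (m : ℕ) : omega6 ^ m = omega6 ^ (m % 6) := by
  conv_lhs => rw [← Nat.div_add_mod m 6]
  rw [pow_add, pow_mul, omega6_pow_six, one_pow, one_mul]

lemma wpow_zero : wpow 0 = 1 := by simp [wpow]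

lemma wpow_add (a b : ZMod 6) : wpow (a + b) = wpow a * wpow b := by
  rw [wpow, wpow, wpow, ZMod.val_add, ← omega6_pow_mod, pow_add]

lemma wpow_ne_zero (j : ZMod 6) : wpow j ≠ 0 := pow_ne_zero _ omega6_ne_zero

lemma wpow_neg_mul (j : ZMod 6) : wpow (-j) * wpow j = 1 := by
  rw [← wpow_add, neg_add_cancel, wpow_zero]

lemma wpow_conj (j : ZMod 6) : (starRingEnd ℂ) (wpow j) = wpow (-j) := by
  have h1 : (starRingEnd ℂ) (wpow j) * wpow j = 1 := by
    rw [wpow, map_pow, ← mul_pow]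
    rw [show (starRingEnd ℂ) omega6 * omega6 = 1 by rw [mul_comm]; exact omega6_mul_conj,
      one_pow]
  exact mul_right_cancel₀ (wpow_ne_zero j) (h1.trans (wpow_neg_mul j).symm)

lemma wpow_inv (j : ZMod 6) : (wpow j)⁻¹ = wpow (-j) :=
  inv_eq_of_mul_eq_one_right (by rw [mul_comm]; exact wpow_neg_mul j)

/-- `z` is a sixth root of unity (a power of `ω`). -/
def IsPow (z : ℂ) : Prop := ∃ j : ZMod 6, z = wpow j

lemma IsPow.one : IsPow 1 := ⟨0, wpow_zero.symm⟩
lemma IsPow.mul {a b : ℂ} (ha : IsPow a) (hb : IsPow b) : IsPow (a * b) := by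
  obtain ⟨i, rfl⟩ := ha; obtain ⟨j, rfl⟩ := hb; exact ⟨i + j, (wpow_add i j).symm⟩
lemma IsPow.inv {a : ℂ} (ha : IsPow a) : IsPow a⁻¹ := by
  obtain ⟨i, rfl⟩ := ha; exact ⟨-i, wpow_inv i⟩
lemma IsPow.conj {a : ℂ} (ha : IsPow a) : IsPow ((starRingEnd ℂ) a) := by
  obtain ⟨i, rfl⟩ := ha; exact ⟨-i, wpow_conj i⟩
lemma IsPow.ne_zero {a : ℂ} (ha : IsPow a) : a ≠ 0 := by
  obtain ⟨i, rfl⟩ := ha; exact wpow_ne_zero i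
lemma IsPow.conj_eq_inv {a : ℂ} (ha : IsPow a) : (starRingEnd ℂ) a = a⁻¹ := by
  obtain ⟨i, rfl⟩ := ha; rw [wpow_conj, wpow_inv]
lemma IsPow.omega6 : IsPow _root_.omega6 := ⟨1, by rw [wpow, show (1 : ZMod 6).val = 1 from rfl, pow_one]⟩
lemma IsPow.conj_omega6 : IsPow ((starRingEnd ℂ) _root_.omega6) := IsPow.omega6.conj

section Machinery

variable {V E : Type} [DecidableEq V]

private lemma sym2_exists_pair (z : Sym2 V) : ∃ p : V × V, z = s(p.1, p.2) :=
  Sym2.ind (fun x y => ⟨(x, y), rfl⟩) z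

/-- A fixed reference orientation of each edge. -/
def refo (G : Multigraph V E) (e : E) : V × V :=
  Classical.choose (sym2_exists_pair (G.ends e))

lemma refo_spec (G : Multigraph V E) (e : E) :
    G.ends e = s((refo G e).1, (refo G e).2) :=
  Classical.choose_spec (sym2_exists_pair (G.ends e))

lemma refo_ne (G : Multigraph V E) (e : E) : (refo G e).1 ≠ (refo G e).2 := by
  have h := G.loopless e
  rw [refo_spec G e] at h
  simpa [Sym2.mk_isDiag_iff] using h

/-- The weight of edge `e` traversed along the reference orientation. -/
def phi {G : Multigraph V E} (M : MixedOrientation G) (e : E) : ℂ :=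
  stepWeight M e (refo G e).1 (refo G e).2

lemma phi_isPow {G : Multigraph V E} (M : MixedOrientation G) (e : E) : IsPow (phi M e) := by
  unfold phi stepWeight
  rcases h : M.orient e with _ | ⟨a, b⟩
  · exact IsPow.one
  · dsimp only
    split
    · exact IsPow.omega6
    · exact IsPow.conj_omega6

lemma ne_of_ends {G : Multigraph V E} {e : E} {u v : V} (h : G.ends e = s(u, v)) : u ≠ v := by
  have hl := G.loopless e
  rw [h] at hl
  simpa [Sym2.mk_isDiag_iff] using hl

lemma step_conj {G : Multigraph V E} (M : MixedOrientation G) {e : E} {u v : V}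
    (h : G.ends e = s(u, v)) :
    stepWeight M e u v = (starRingEnd ℂ) (stepWeight M e v u) := by
  have huv : u ≠ v := ne_of_ends h
  unfold stepWeight
  rcases horient : M.orient e with _ | ⟨a, b⟩
  · simp
  · have hab : G.ends e = s(a, b) := M.compat e a b horient
    have : s(a, b) = s(u, v) := hab.symm.trans h
    rw [Sym2.eq_iff] at this
    dsimp only
    rcases this with ⟨rfl, rfl⟩ | ⟨rfl, rfl⟩ <;> simp [huv, Ne.symm huv]

lemma step_phi {G : Multigraph V E} (M : MixedOrientation G) {e : E} {u v : V}
    (h : G.ends e = s(u, v)) :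
    stepWeight M e u v =
      if refo G e = (u, v) then phi M e else (starRingEnd ℂ) (phi M e) := by
  have huv : u ≠ v := ne_of_ends h
  have hs : s((refo G e).1, (refo G e).2) = s(u, v) := (refo_spec G e).symm.trans h
  rw [Sym2.eq_iff] at hs
  rcases hs with ⟨h1, h2⟩ | ⟨h1, h2⟩
  · rw [if_pos (by rw [← h1, ← h2])]
    unfold phi
    rw [h1, h2]
  · rw [if_neg (fun hc => huv (by rw [hc] at h1; exact h1))]
    unfold phi
    rw [h1, h2]
    exact step_conj M h

lemma herm_phi [Fintype V] [Fintype E] {G : Multigraph V E} (M : MixedOrientation G)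
    (u v : V) :
    herm M u v = ∑ e : E, if G.ends e = s(u, v) then
      (if refo G e = (u, v) then phi M e else (starRingEnd ℂ) (phi M e)) else 0 := by
  unfold herm
  rw [Matrix.of_apply]
  refine Finset.sum_congr rfl fun e _ => ?_
  by_cases h : G.ends e = s(u, v)
  · rw [if_pos h, if_pos h, step_phi M h]
  · rw [if_neg h, if_neg h]

end Machinery

section Machinery2

variable {V E : Type} [DecidableEq V]

lemma isSixthRoots_of_isPow {d : V → ℂ} (hd : ∀ v, IsPow (d v)) : IsSixthRoots d := by
  intro v
  obtain ⟨j, hj⟩ := hd v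
  exact ⟨j.val, by have := ZMod.val_lt j; omega, by rw [hj, wpow]⟩

lemma switching_of_weights [Fintype V] [Fintype E] {G : Multigraph V E}
    {M' M'' : MixedOrientation G} (d : V → ℂ) (hd : ∀ v, IsPow (d v))
    (hw : ∀ e, phi M'' e = (d (refo G e).1)⁻¹ * phi M' e * d (refo G e).2) :
    Switching M' M'' := by
  refine ⟨d, isSixthRoots_of_isPow hd, ?_⟩
  have hdne : ∀ v, d v ≠ 0 := fun v => (hd v).ne_zero
  have hinv : (Matrix.diagonal d)⁻¹ = Matrix.diagonal (fun v => (d v)⁻¹) :=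
    Matrix.inv_eq_right_inv (by
      rw [Matrix.diagonal_mul_diagonal,
        show (fun v => d v * (d v)⁻¹) = fun _ => (1 : ℂ) from
          funext fun v => mul_inv_cancel₀ (hdne v), Matrix.diagonal_one])
  rw [hinv]
  ext u v
  rw [Matrix.mul_diagonal, Matrix.diagonal_mul, herm_phi M'' u v, herm_phi M' u v,
    Finset.mul_sum, Finset.sum_mul]
  refine Finset.sum_congr rfl fun e _ => ?_
  by_cases hse : G.ends e = s(u, v)
  · rw [if_pos hse, if_pos hse]
    have hne := ne_of_ends hse
    rcases Sym2.eq_iff.mp ((refo_spec G e).symm.trans hse) with ⟨h1, h2⟩ | ⟨h1, h2⟩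
    · have hr : refo G e = (u, v) := Prod.ext h1 h2
      rw [if_pos hr, if_pos hr, hw e, hr]
    · have hr : refo G e ≠ (u, v) := by
        intro hc; rw [hc] at h1; exact hne h1
      have hr2 : refo G e = (v, u) := Prod.ext h1 h2
      rw [if_neg hr, if_neg hr, hw e, hr2]
      rw [map_mul, map_mul, map_inv₀, (hd v).conj_eq_inv, (hd u).conj_eq_inv, inv_inv]
      ring
  · rw [if_neg hse, if_neg hse]; ring

/-- The converse of a mixed multigraph. -/
def converseM {G : Multigraph V E} (M : MixedOrientation G) : MixedOrientation G where
  orient e := Option.map Prod.swap (M.orient e)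
  compat e a b h := by
    rcases Option.map_eq_some_iff.mp h with ⟨⟨x, y⟩, hM, hswap⟩
    rw [Prod.swap_prod_mk] at hswap
    injection hswap with h1 h2
    subst h1; subst h2
    rw [M.compat e x y hM, Sym2.eq_swap]
  noDigon e f a b hef he hf := by
    rcases Option.map_eq_some_iff.mp he with ⟨⟨x, y⟩, hMe, hsw⟩
    rw [Prod.swap_prod_mk] at hsw
    injection hsw with h1 h2
    subst h1; subst h2
    rcases Option.map_eq_some_iff.mp hf with ⟨⟨x', y'⟩, hMf, hsw'⟩
    rw [Prod.swap_prod_mk] at hsw'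
    injection hsw' with h3 h4
    subst h3; subst h4
    exact M.noDigon f e _ _ hef.symm hMf hMe

lemma isConverse_converseM {G : Multigraph V E} (M : MixedOrientation G) :
    IsConverse M (converseM M) := fun _ => rfl

lemma step_isConverse {G : Multigraph V E} {M Mc : MixedOrientation G}
    (hc : IsConverse M Mc) {e : E} {u v : V} (h : G.ends e = s(u, v)) :
    stepWeight Mc e u v = (starRingEnd ℂ) (stepWeight M e u v) := by
  have huv : u ≠ v := ne_of_ends h
  have hce := hc e
  unfold stepWeight
  rcases hM : M.orient e with _ | ⟨x, y⟩ <;> rw [hM] at hce <;> rw [hce]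
  · simp
  · have hxy : s(x, y) = s(u, v) := (M.compat e x y hM).symm.trans h
    rw [Sym2.eq_iff] at hxy
    dsimp only [Option.map_some, Prod.swap_prod_mk]
    rcases hxy with ⟨rfl, rfl⟩ | ⟨rfl, rfl⟩ <;> simp [huv, Ne.symm huv]

lemma phi_isConverse {G : Multigraph V E} {M Mc : MixedOrientation G}
    (hc : IsConverse M Mc) (e : E) :
    phi Mc e = (starRingEnd ℂ) (phi M e) :=
  step_isConverse hc (refo_spec G e)

lemma herm_isConverse [Fintype V] [Fintype E] {G : Multigraph V E}
    {M Mc : MixedOrientation G} (hc : IsConverse M Mc) :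
    herm Mc = (herm M).transpose := by
  ext u v
  rw [Matrix.transpose_apply]
  unfold herm
  rw [Matrix.of_apply, Matrix.of_apply]
  refine Finset.sum_congr rfl fun e _ => ?_
  have hsym : s(u, v) = s(v, u) := Sym2.eq_swap
  by_cases hse : G.ends e = s(u, v)
  · rw [if_pos hse, if_pos (hsym ▸ hse), step_isConverse hc hse,
      step_conj M hse, Complex.conj_conj]
  · rw [if_neg hse, if_neg (fun hcon => hse (hcon.trans hsym.symm))]

end Machinery2

section Charpoly

open Polynomial

variable {n : Type} [DecidableEq n] [Fintype n]

lemma charpoly_transpose_eq (A : Matrix n n ℂ) : A.transpose.charpoly = A.charpoly := by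
  have h : Matrix.charmatrix A.transpose = (Matrix.charmatrix A).transpose := by
    refine Matrix.ext fun i j => ?_
    by_cases h : i = j
    · subst h; simp
    · simp [Matrix.charmatrix_apply_ne _ _ _ h, Matrix.charmatrix_apply_ne _ _ _ (Ne.symm h)]
  rw [Matrix.charpoly, Matrix.charpoly, h, Matrix.det_transpose]

lemma charpoly_conj_eq (P A : Matrix n n ℂ) (h : IsUnit P.det) :
    (P⁻¹ * A * P).charpoly = A.charpoly := by
  set B := P⁻¹ * A * P with hB
  have hPB : P * B = A * P := by
    rw [hB, ← Matrix.mul_assoc, ← Matrix.mul_assoc, Matrix.mul_nonsing_inv P h,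
      Matrix.one_mul]
  have key : (Polynomial.C.mapMatrix P) * Matrix.charmatrix B =
      Matrix.charmatrix A * (Polynomial.C.mapMatrix P) := by
    unfold Matrix.charmatrix
    rw [Matrix.mul_sub, Matrix.sub_mul, ← RingHom.map_mul, ← RingHom.map_mul, hPB]
    congr 1
    exact (Matrix.scalar_commute (X : ℂ[X]) (fun r => Commute.all _ _) _).symm
  have hdet := congrArg Matrix.det key
  rw [Matrix.det_mul, Matrix.det_mul] at hdet
  have hPdet : (Polynomial.C.mapMatrix P).det = Polynomial.C P.det :=
    (RingHom.map_det Polynomial.C P).symm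
  rw [hPdet] at hdet
  have hC : (Polynomial.C P.det : ℂ[X]) ≠ 0 := by
    simpa using h.ne_zero
  rw [Matrix.charpoly, Matrix.charpoly]
  rw [mul_comm] at hdet
  exact mul_right_cancel₀ hC hdet

end Charpoly

section Tree

variable {V E : Type} [DecidableEq V]

lemma crossing {G : Multigraph V E} {S : Finset V} {u v : V}
    (h : ReachIn G Set.univ u v) (hu : u ∈ S) (hv : v ∉ S) :
    ∃ e x y, G.ends e = s(x, y) ∧ x ∈ S ∧ y ∉ S := by
  induction h with
  | refl => exact absurd hu hv
  | @tail b c hab hbc ih =>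
    by_cases hb : b ∈ S
    · obtain ⟨e, -, he⟩ := hbc
      exact ⟨e, b, c, he, hb, hv⟩
    · exact ih hb

lemma exists_tree [Fintype V] [Fintype E] [DecidableEq E] (G : Multigraph V E)
    (hconn : G.Connected) (r : V) :
    ∃ T : Finset E, T.card + 1 = Fintype.card V ∧
      ∀ w : E → ℂ, (∀ e, IsPow (w e)) →
        ∃ d : V → ℂ, (∀ v, IsPow (d v)) ∧
          ∀ e ∈ T, (d (refo G e).1)⁻¹ * w e * d (refo G e).2 = 1 := by
  suffices H : ∀ n (S : Finset V) (T : Finset E), r ∈ S → T.card + 1 = S.card →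
      (∀ e ∈ T, (refo G e).1 ∈ S ∧ (refo G e).2 ∈ S) →
      (∀ w : E → ℂ, (∀ e, IsPow (w e)) →
        ∃ d : V → ℂ, (∀ v, IsPow (d v)) ∧
          ∀ e ∈ T, (d (refo G e).1)⁻¹ * w e * d (refo G e).2 = 1) →
      Fintype.card V ≤ S.card + n →
      ∃ T' : Finset E, T'.card + 1 = Fintype.card V ∧
        ∀ w : E → ℂ, (∀ e, IsPow (w e)) →
          ∃ d : V → ℂ, (∀ v, IsPow (d v)) ∧
            ∀ e ∈ T', (d (refo G e).1)⁻¹ * w e * d (refo G e).2 = 1 by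
    refine H (Fintype.card V) {r} ∅ (Finset.mem_singleton_self r) (by simp) (by simp) ?_ (by simp)
    intro w hw
    exact ⟨fun _ => 1, fun _ => IsPow.one, by simp⟩
  intro n
  induction n with
  | zero =>
    intro S T hr hcard hends hd hle
    have hSuniv : S = Finset.univ := Finset.eq_univ_of_card S
      (le_antisymm (Finset.card_le_univ S) (by simpa using hle))
    exact ⟨T, by rw [hcard, hSuniv, Finset.card_univ], hd⟩
  | succ n ih =>
    intro S T hr hcard hends hd hle
    by_cases hSuniv : S = Finset.univ
    · exact ⟨T, by rw [hcard, hSuniv, Finset.card_univ], hd⟩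
    · obtain ⟨v0, hv0⟩ : ∃ v0, v0 ∉ S := by
        by_contra hc
        push_neg at hc
        exact hSuniv (Finset.eq_univ_iff_forall.mpr hc)
      obtain ⟨e0, x, y, hexy, hxS, hyS⟩ := crossing (hconn r v0) hr hv0
      have hxyne : x ≠ y := ne_of_ends hexy
      have hrefo : refo G e0 = (x, y) ∨ refo G e0 = (y, x) := by
        rcases Sym2.eq_iff.mp ((refo_spec G e0).symm.trans hexy) with ⟨h1, h2⟩ | ⟨h1, h2⟩
        · exact Or.inl (Prod.ext h1 h2)
        · exact Or.inr (Prod.ext h1 h2)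
      have he0T : e0 ∉ T := by
        intro hmem
        rcases hrefo with h | h
        · have h2 := (hends e0 hmem).2
          rw [h] at h2
          exact hyS h2
        · have h2 := (hends e0 hmem).1
          rw [h] at h2
          exact hyS h2
      refine ih (insert y S) (insert e0 T) (Finset.mem_insert_of_mem hr) ?_ ?_ ?_ ?_
      · rw [Finset.card_insert_of_notMem he0T, Finset.card_insert_of_notMem hyS]
        omega
      · intro e he
        rcases Finset.mem_insert.mp he with rfl | he'
        · rcases hrefo with h | h <;> rw [h] <;>
            exact ⟨by simp [Finset.mem_insert, hxS], by simp [Finset.mem_insert, hxS]⟩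
        · exact ⟨Finset.mem_insert_of_mem (hends e he').1,
            Finset.mem_insert_of_mem (hends e he').2⟩
      · intro w hw
        obtain ⟨d, hdpow, hdtree⟩ := hd w hw
        rcases hrefo with h | h
        · refine ⟨Function.update d y ((w e0)⁻¹ * d x), ?_, ?_⟩
          · intro v
            by_cases hv : v = y
            · rw [hv, Function.update_self]
              exact ((hw e0).inv.mul (hdpow x))
            · rw [Function.update_of_ne hv]
              exact hdpow v
          · intro ee hee
            rcases Finset.mem_insert.mp hee with rfl | he'
            · rw [h]
              dsimp only
              rw [Function.update_self, Function.update_of_ne hxyne]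
              field_simp
              rw [mul_comm (d x) (w ee)]
              exact div_self (mul_ne_zero (hw ee).ne_zero (hdpow x).ne_zero)
            · have h1 := (hends ee he').1
              have h2 := (hends ee he').2
              rw [Function.update_of_ne (fun hc => hyS (by rw [← hc]; exact h1)),
                Function.update_of_ne (fun hc => hyS (by rw [← hc]; exact h2))]
              exact hdtree ee he'
        · refine ⟨Function.update d y (w e0 * d x), ?_, ?_⟩
          · intro v
            by_cases hv : v = y
            · rw [hv, Function.update_self]
              exact ((hw e0).mul (hdpow x))
            · rw [Function.update_of_ne hv]
              exact hdpow v
          · intro ee hee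
            rcases Finset.mem_insert.mp hee with rfl | he'
            · rw [h]
              dsimp only
              rw [Function.update_self, Function.update_of_ne hxyne]
              have hwne := (hw ee).ne_zero
              have hdne := (hdpow x).ne_zero
              field_simp
            · have h1 := (hends ee he').1
              have h2 := (hends ee he').2
              rw [Function.update_of_ne (fun hc => hyS (by rw [← hc]; exact h1)),
                Function.update_of_ne (fun hc => hyS (by rw [← hc]; exact h2))]
              exact hdtree ee he'
      · rw [Finset.card_insert_of_notMem hyS]
        omega

end Tree

section Ext

variable {V E : Type} [DecidableEq V]

lemma mixedOrientation_finite {G : Multigraph V E} [Fintype V] [Fintype E] :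
    Finite (MixedOrientation G) := by
  classical
  exact Finite.of_injective (fun M => M.orient) (fun a b h => by
    cases a; cases b; simp only at h; subst h; rfl)

lemma switchEquiv_charpoly [Fintype V] [Fintype E] {G : Multigraph V E}
    {M M' : MixedOrientation G} (h : SwitchEquiv M M') :
    (herm M).charpoly = (herm M').charpoly := by
  have hsw : ∀ {A B : MixedOrientation G}, Switching A B →
      (herm B).charpoly = (herm A).charpoly := by
    rintro A B ⟨d, hd, heq⟩
    have hdet : IsUnit (Matrix.diagonal d).det := by
      rw [Matrix.det_diagonal]
      refine isUnit_iff_ne_zero.mpr (Finset.prod_ne_zero_iff.mpr fun v _ => ?_)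
      obtain ⟨i, -, hv⟩ := hd v
      rw [hv]; exact pow_ne_zero _ omega6_ne_zero
    rw [heq]
    exact charpoly_conj_eq _ _ hdet
  rcases h with hs | ⟨Mc, hconv, hs⟩
  · exact (hsw hs).symm
  · calc (herm M).charpoly = (herm M).transpose.charpoly := (charpoly_transpose_eq _).symm
      _ = (herm Mc).charpoly := by rw [herm_isConverse hconv]
      _ = (herm M').charpoly := (hsw hs).symm

lemma ext_eq [Fintype V] [Fintype E] {G : Multigraph V E}
    (M1 M2 : MixedOrientation G) (d1 d2 : V → ℂ)
    (h1 : ∀ v, IsPow (d1 v)) (h2 : ∀ v, IsPow (d2 v))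
    (heq : ∀ e, (d1 (refo G e).1)⁻¹ * phi M1 e * d1 (refo G e).2 =
      (d2 (refo G e).1)⁻¹ * phi M2 e * d2 (refo G e).2) :
    SwitchEquiv M1 M2 := by
  refine Or.inl (switching_of_weights (fun v => d1 v * (d2 v)⁻¹)
    (fun v => (h1 v).mul (h2 v).inv) ?_)
  intro e
  have h := heq e
  have n1a := (h1 (refo G e).1).ne_zero
  have n1b := (h1 (refo G e).2).ne_zero
  have n2a := (h2 (refo G e).1).ne_zero
  have n2b := (h2 (refo G e).2).ne_zero
  rw [mul_inv_rev, inv_inv]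
  field_simp at h ⊢
  linear_combination -h

lemma ext_conj [Fintype V] [Fintype E] {G : Multigraph V E}
    (M1 M2 : MixedOrientation G) (d1 d2 : V → ℂ)
    (h1 : ∀ v, IsPow (d1 v)) (h2 : ∀ v, IsPow (d2 v))
    (heq : ∀ e, (d1 (refo G e).1)⁻¹ * phi M1 e * d1 (refo G e).2 =
      (starRingEnd ℂ) ((d2 (refo G e).1)⁻¹ * phi M2 e * d2 (refo G e).2)) :
    SwitchEquiv M1 M2 := by
  refine Or.inr ⟨converseM M1, isConverse_converseM M1,
    switching_of_weights (fun v => (starRingEnd ℂ) (d1 v) * (d2 v)⁻¹)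
      (fun v => (h1 v).conj.mul (h2 v).inv) ?_⟩
  intro e
  have h := congrArg (starRingEnd ℂ) (heq e)
  rw [Complex.conj_conj, map_mul, map_mul, map_inv₀] at h
  rw [← phi_isConverse (isConverse_converseM M1) e] at h
  have n1a := (h1 (refo G e).1).conj.ne_zero
  have n1b := (h1 (refo G e).2).conj.ne_zero
  have n2a := (h2 (refo G e).1).ne_zero
  have n2b := (h2 (refo G e).2).ne_zero
  rw [mul_inv_rev, inv_inv]
  field_simp at h ⊢
  linear_combination -h

end Ext

/-- Theorem mai00: for a connected `k`-cyclic multigraph `G` (`k ≥ 1`),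
the number of cospectral classes is at most the number of switching equivalence classes,
which is at most `6^k/2 + 2^(k-1)`. -/
theorem number_of_classes_bound [Fintype V] [Fintype E] {G : Multigraph V E}
    (hconn : G.Connected) (k : ℕ) (hk : 1 ≤ k)
    (hcyclic : Fintype.card E + 1 = Fintype.card V + k) :
    Nat.card (Quot (fun M M' : MixedOrientation G =>
        (herm M).charpoly = (herm M').charpoly)) ≤
      Nat.card (Quot (fun M M' : MixedOrientation G => SwitchEquiv M M')) ∧
    Nat.card (Quot (fun M M' : MixedOrientation G => SwitchEquiv M M')) ≤
      6 ^ k / 2 + 2 ^ (k - 1) := by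

  classical
  haveI : Finite (MixedOrientation G) := mixedOrientation_finite
  constructor
  · -- cospectral classes ≤ switching classes
    have hwd : ∀ a b : MixedOrientation G, SwitchEquiv a b →
        Quot.mk (fun M M' : MixedOrientation G =>
          (herm M).charpoly = (herm M').charpoly) a =
        Quot.mk (fun M M' : MixedOrientation G =>
          (herm M).charpoly = (herm M').charpoly) b :=
      fun a b h => Quot.sound (switchEquiv_charpoly h)
    refine Nat.card_le_card_of_surjective (Quot.lift _ hwd) ?_
    intro q
    induction q using Quot.ind with
    | _ M => exact ⟨Quot.mk _ M, rfl⟩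
  · -- the counting bound
    have hbound_pos : 1 ≤ 6 ^ k / 2 + 2 ^ (k - 1) :=
      le_trans Nat.one_le_two_pow (Nat.le_add_left _ _)
    by_cases hV : Nonempty V
    swap
    · -- degenerate case: no vertices, hence no edges and a single mixed multigraph
      haveI hIE : IsEmpty V := not_nonempty_iff.mp hV
      haveI : IsEmpty E := ⟨fun e => hIE.false (Classical.choose (sym2_exists_pair (G.ends e))).1⟩
      haveI : Subsingleton (MixedOrientation G) := ⟨fun a b => by
        cases a; cases b
        congr 1
        exact funext fun e => isEmptyElim e⟩
      haveI : Subsingleton (Quot (fun M M' : MixedOrientation G => SwitchEquiv M M')) :=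
        ⟨fun a b => by
          induction a using Quot.ind with | _ x =>
          induction b using Quot.ind with | _ y =>
          rw [Subsingleton.elim x y]⟩
      haveI : Fintype (Quot (fun M M' : MixedOrientation G => SwitchEquiv M M')) :=
        Fintype.ofFinite _
      rw [Nat.card_eq_fintype_card]
      exact le_trans (Fintype.card_le_one_iff_subsingleton.mpr inferInstance) hbound_pos
    · obtain ⟨r⟩ := hV
      obtain ⟨T, hTcard, hTd⟩ := exists_tree G hconn r
      have hRcard : (Finset.univ \ T).card = k := by
        have h2 : (Finset.univ \ T).card = Fintype.card E - T.card := by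
          rw [Finset.card_sdiff_of_subset (Finset.subset_univ T), Finset.card_univ]
        omega
      -- normalizing switching functions for each mixed multigraph
      choose df hdfpow hdftree using fun M : MixedOrientation G => hTd (phi M) (phi_isPow M)
      -- indices of the normalized weights
      choose idx hidx using fun (M : MixedOrientation G) (e : E) =>
        ((hdfpow M (refo G e).1).inv.mul (phi_isPow M e)).mul (hdfpow M (refo G e).2)
      -- the two key extension lemmas
      have hfrom1 : ∀ M1 M2 : MixedOrientation G,
          (∀ e ∈ Finset.univ \ T, idx M1 e = idx M2 e) → SwitchEquiv M1 M2 := by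
        intro M1 M2 hR
        refine ext_eq M1 M2 (df M1) (df M2) (hdfpow M1) (hdfpow M2) fun e => ?_
        by_cases he : e ∈ T
        · rw [hdftree M1 e he, hdftree M2 e he]
        · rw [hidx M1 e, hidx M2 e, hR e (Finset.mem_sdiff.mpr ⟨Finset.mem_univ e, he⟩)]
      have hfrom2 : ∀ M1 M2 : MixedOrientation G,
          (∀ e ∈ Finset.univ \ T, idx M1 e = -idx M2 e) → SwitchEquiv M1 M2 := by
        intro M1 M2 hR
        refine ext_conj M1 M2 (df M1) (df M2) (hdfpow M1) (hdfpow M2) fun e => ?_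
        by_cases he : e ∈ T
        · rw [hdftree M1 e he, hdftree M2 e he, map_one]
        · rw [hidx M1 e, hidx M2 e, wpow_conj,
            hR e (Finset.mem_sdiff.mpr ⟨Finset.mem_univ e, he⟩)]
      haveI : Fintype (Quot (fun M M' : MixedOrientation G => SwitchEquiv M M')) :=
        Fintype.ofFinite _
      set Q := Quot (fun M M' : MixedOrientation G => SwitchEquiv M M') with hQ
      set H : Q → (((Finset.univ \ T : Finset E) : Type) → ZMod 6) :=
        fun q s => idx q.out s.1 with hH
      have hmkout : ∀ q : Q, Quot.mk _ q.out = q := fun q => Quot.out_eq q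
      have hH1 : ∀ q1 q2 : Q, H q1 = H q2 → q1 = q2 := by
        intro q1 q2 h
        rw [← hmkout q1, ← hmkout q2]
        refine Quot.sound (hfrom1 _ _ fun e he => ?_)
        exact congrFun h ⟨e, he⟩
      have hH2 : ∀ q1 q2 : Q, H q1 = -H q2 → q1 = q2 := by
        intro q1 q2 h
        rw [← hmkout q1, ← hmkout q2]
        refine Quot.sound (hfrom2 _ _ fun e he => ?_)
        exact congrFun h ⟨e, he⟩
      have hHinj : Function.Injective H := fun q1 q2 h => hH1 q1 q2 h
      set A := Finset.image H Finset.univ with hA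
      set B := Finset.image (fun f => -f) A with hB
      have hAcard : A.card = Fintype.card Q := by
        rw [hA, Finset.card_image_of_injective _ hHinj, Finset.card_univ]
      have hBcard : B.card = A.card :=
        Finset.card_image_of_injective _ neg_injective
      have hABsub : A ∩ B ⊆ Finset.univ.filter (fun f => f = -f) := by
        intro x hx
        rw [Finset.mem_inter] at hx
        obtain ⟨hxA, hxB⟩ := hx
        obtain ⟨q1, -, rfl⟩ := Finset.mem_image.mp hxA
        obtain ⟨y, hyA, hxy⟩ := Finset.mem_image.mp hxB
        obtain ⟨q2, -, rfl⟩ := Finset.mem_image.mp hyA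
        have hq : q1 = q2 := hH2 q1 q2 hxy.symm
        subst hq
        exact Finset.mem_filter.mpr ⟨Finset.mem_univ _, hxy.symm⟩
      have hFix : (Finset.univ.filter
          (fun f : ((Finset.univ \ T : Finset E) : Type) → ZMod 6 => f = -f)).card
          = 2 ^ k := by
        rw [← Fintype.card_subtype]
        have hequiv1 : {f : ((Finset.univ \ T : Finset E) : Type) → ZMod 6 // f = -f} ≃
            {f : ((Finset.univ \ T : Finset E) : Type) → ZMod 6 // ∀ i, f i = -(f i)} :=
          Equiv.subtypeEquivRight (fun f =>
            ⟨fun h i => congrFun h i, fun h => funext fun i => h i⟩)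
        have hequiv2 : {f : ((Finset.univ \ T : Finset E) : Type) → ZMod 6 // ∀ i, f i = -(f i)} ≃
            (((Finset.univ \ T : Finset E) : Type) → {j : ZMod 6 // j = -j}) :=
          Equiv.subtypePiEquivPi (p := fun _ j => j = -j)
        have hequiv := hequiv1.trans hequiv2
        rw [Fintype.card_congr hequiv, Fintype.card_fun, Fintype.card_coe, hRcard,
          show Fintype.card {j : ZMod 6 // j = -j} = 2 from rfl]
      have hcardF : Fintype.card (((Finset.univ \ T : Finset E) : Type) → ZMod 6)
          = 6 ^ k := by
        rw [Fintype.card_fun, Fintype.card_coe, hRcard, ZMod.card]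
      have hunion : (A ∪ B).card + (A ∩ B).card = A.card + B.card :=
        Finset.card_union_add_card_inter A B
      have hUc : (Finset.univ :
          Finset (((Finset.univ \ T : Finset E) : Type) → ZMod 6)).card = 6 ^ k := by
        rw [Finset.card_univ, hcardF]
      have hU : (A ∪ B).card ≤ 6 ^ k := le_trans (Finset.card_le_univ _) (le_of_eq hUc)
      have hI : (A ∩ B).card ≤ 2 ^ k :=
        le_trans (Finset.card_le_card hABsub) (le_of_eq hFix)
      have h2N : 2 * Fintype.card Q ≤ 6 ^ k + 2 ^ k := by omega
      rw [Nat.card_eq_fintype_card]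
      obtain ⟨m, rfl⟩ : ∃ m, k = m + 1 := ⟨k - 1, by omega⟩
      have e1 : (6 : ℕ) ^ (m + 1) = 6 ^ m * 6 := pow_succ 6 m
      have e2 : (2 : ℕ) ^ (m + 1) = 2 ^ m * 2 := pow_succ 2 m
      have e3 : (6 : ℕ) ^ (m + 1) / 2 = 6 ^ m * 3 := by
        rw [e1, Nat.mul_div_assoc _ (by norm_num : (2 : ℕ) ∣ 6)]
      have e4 : (m + 1) - 1 = m := rfl
      rw [e3, e4]
      omega


end
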